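/- For every n ≥ 0, the derivative of φ̂_{n+1} satisfies φ̂'_{n+1}(x) = Σ_{k=0}^{⌊n/2⌋} (-1)^k C(n+1, 2k+1) ((2k)!/2^{2k}) φ̂_{n-2k}(x), where C denotes a binomial coefficient. -/

import Mathlib

open Polynomial

noncomputable def mlc (n k : ℕ) : ℝ :=
  (-1 : ℝ) ^ k * (Nat.choose (n + 1) (2 * k + 1)) * (Nat.factorial (2 * k)) / 2 ^ (2 * k)

lemma mlc_def (n k : ℕ) :
    ((-1 : ℝ) ^ k * (Nat.choose (n + 1) (2 * k + 1)) * (Nat.factorial (2 * k)) / 2 ^ (2 * k))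
      = mlc n k := rfl

lemma mlc_zero (N : ℕ) : mlc N 0 = (N : ℝ) + 1 := by
  simp [mlc]

lemma key1 (n k : ℕ) (h : 2*k+1 ≤ n) :
    (2*(k:ℝ)+2) * ((n+1).choose (2*k+2) : ℝ)
      = ((n:ℝ) - 2*k) * ((n+1).choose (2*k+1) : ℝ) := by
  have h2 : 2*k ≤ n := by omega
  have h3 := Nat.choose_succ_right_eq (n+1) (2*k+1)
  have hc : (n+1) - (2*k+1) = n - 2*k := by omega
  rw [hc] at h3
  have h4 := congrArg (Nat.cast : ℕ → ℝ) h3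
  push_cast [Nat.cast_sub h2] at h4
  linarith [h4]

lemma key2 (n k : ℕ) :
    ((n:ℝ)+1) * (n.choose (2*k+1) : ℝ) = (2*(k:ℝ)+2) * ((n+1).choose (2*k+2) : ℝ) := by
  have h3 := Nat.add_one_mul_choose_eq n (2*k+1)
  have h4 := congrArg (Nat.cast : ℕ → ℝ) h3
  push_cast at h4
  linarith [h4]

lemma key3 (N k : ℕ) (h : 2*k+1 ≤ N) :
    (2*(k:ℝ)+2)*(2*(k:ℝ)+1) * ((N+1).choose (2*k+2) : ℝ)
      + ((N:ℝ)-2*k)*((N:ℝ)-2*k+1) * ((N+1).choose (2*k+1) : ℝ)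
      = ((N:ℝ)+1)*((N:ℝ)+2) * (N.choose (2*k+1) : ℝ) := by
  linear_combination (-((N:ℝ) - 2*k + 1)) * key1 N k h + (-((N:ℝ)+2)) * key2 N k

lemma coeff_id (N k : ℕ) (h : 2*k+1 ≤ N) :
    mlc (N+1) (k+1)
      = mlc N (k+1)
        + mlc N k * (((N-2*k : ℕ):ℝ) * (((N-2*k:ℕ):ℝ)+1)/4)
        - (((N:ℝ)+1)*((N:ℝ)+2)/4) * mlc (N-1) k := by
  have h2 : 2*k ≤ N := by omega
  have hN : N - 1 + 1 = N := by omega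
  have hcast : ((N - 2*k : ℕ) : ℝ) = (N:ℝ) - 2*k := by
    push_cast [Nat.cast_sub h2]; ring
  have hpas : ((N+2).choose (2*(k+1)+1) : ℝ)
      = ((N+1).choose (2*k+2) : ℝ) + ((N+1).choose (2*k+3) : ℝ) := by
    have h3 := Nat.choose_succ_succ (N+1) (2*k+2)
    have h4 := congrArg (Nat.cast : ℕ → ℝ) h3
    push_cast at h4 ⊢
    convert h4 using 3
    omega
  have hfact : ((2*(k+1)).factorial : ℝ) = (2*(k:ℝ)+2)*(2*(k:ℝ)+1) * ((2*k).factorial : ℝ) := by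
    have h5 : 2*(k+1) = (2*k+1)+1 := by ring
    rw [h5, Nat.factorial_succ, Nat.factorial_succ]
    push_cast; ring
  have hp1 : (2:ℝ)^(2*k) = 4^k := by rw [pow_mul]; norm_num
  have hp2 : (2:ℝ)^(2*(k+1)) = 4^(k+1) := by rw [pow_mul]; norm_num
  have h5 : 2*(k+1)+1 = 2*k+3 := by ring
  unfold mlc
  rw [hN, hcast, hpas, hfact, hp1, hp2, h5]
  linear_combination (-((-1:ℝ)^k * ((2*k).factorial : ℝ)) / 4^(k+1)) * key3 N k h

lemma key (f : ℕ → Polynomial ℝ) (h0 : f 0 = 1) (h1 : f 1 = X)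
    (hrec : ∀ n : ℕ, 1 ≤ n →
      f (n + 1) = X * f n - C ((n : ℝ) * ((n : ℝ) + 1) / 4) * f (n - 1)) (n : ℕ) :
    f (n+2) + X * (∑ k ∈ Finset.range ((n+1)/2+1), mlc (n+1) k • f (n+1-2*k))
      - C (((n:ℝ)+2)*((n:ℝ)+3)/4) * (∑ k ∈ Finset.range (n/2+1), mlc n k • f (n-2*k))
    = ∑ k ∈ Finset.range (n/2+1+1), mlc (n+2) k • f (n+2-2*k) := by
  have hstep : ∀ m : ℕ, X * f m = f (m+1) + C ((m:ℝ)*((m:ℝ)+1)/4) * f (m-1) := by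
    intro m
    match m with
    | 0 => simp [h0, h1]
    | (m+1) =>
      have h := hrec (m+1) (by omega)
      rw [h]; push_cast; ring
  have expand : ∀ (m : ℕ) (c : ℝ), X * (c • f m)
      = c • f (m+1) + (c * ((m:ℝ)*((m:ℝ)+1)/4)) • f (m-1) := by
    intro m c
    simp only [smul_eq_C_mul, map_mul]
    rw [show X * (Polynomial.C c * f m) = Polynomial.C c * (X * f m) from by ring, hstep m]
    ring
  have hXS : X * (∑ k ∈ Finset.range ((n+1)/2+1), mlc (n+1) k • f (n+1-2*k))
      = (∑ k ∈ Finset.range ((n+1)/2+1), mlc (n+1) k • f (n+2-2*k))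
        + ∑ k ∈ Finset.range ((n+1)/2+1),
            (mlc (n+1) k * (((n+1-2*k : ℕ):ℝ)*(((n+1-2*k:ℕ):ℝ)+1)/4)) • f (n-2*k) := by
    rw [Finset.mul_sum, ← Finset.sum_add_distrib]
    refine Finset.sum_congr rfl fun k hk => ?_
    rw [Finset.mem_range] at hk
    have h2k : 2*k ≤ n+1 := by omega
    rw [expand (n+1-2*k), show n+1-2*k+1 = n+2-2*k from by omega,
      show n+1-2*k-1 = n-2*k from by omega]
  have hCS : C (((n:ℝ)+2)*((n:ℝ)+3)/4) * (∑ k ∈ Finset.range (n/2+1), mlc n k • f (n-2*k))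
      = ∑ k ∈ Finset.range (n/2+1), ((((n:ℝ)+2)*((n:ℝ)+3)/4) * mlc n k) • f (n-2*k) := by
    rw [Finset.mul_sum]
    refine Finset.sum_congr rfl fun k _ => ?_
    simp only [smul_eq_C_mul, map_mul]; ring
  have hT : ∑ k ∈ Finset.range (n/2+1+1), mlc (n+2) k • f (n+2-2*k)
      = (∑ k ∈ Finset.range (n/2+1), mlc (n+2) (k+1) • f (n-2*k)) + mlc (n+2) 0 • f (n+2) := by
    rw [Finset.sum_range_succ']
    congr 1
    exact Finset.sum_congr rfl fun k _ => by rw [show n+2-2*(k+1) = n-2*k from by omega]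
  have hS1 : (∑ k ∈ Finset.range ((n+1)/2+1), mlc (n+1) k • f (n+2-2*k))
      = (∑ k ∈ Finset.range ((n+1)/2), mlc (n+1) (k+1) • f (n-2*k)) + mlc (n+1) 0 • f (n+2) := by
    rw [Finset.sum_range_succ']
    congr 1
    exact Finset.sum_congr rfl fun k _ => by rw [show n+2-2*(k+1) = n-2*k from by omega]
  have hext : (∑ k ∈ Finset.range ((n+1)/2), mlc (n+1) (k+1) • f (n-2*k))
      = ∑ k ∈ Finset.range (n/2+1), mlc (n+1) (k+1) • f (n-2*k) := by
    obtain ⟨m, rfl | rfl⟩ := Nat.even_or_odd' n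
    · rw [show (2*m+1)/2 = m from by omega, show (2*m)/2+1 = m+1 from by omega,
        Finset.sum_range_succ]
      have hz : mlc (2*m+1) (m+1) = 0 := by
        unfold mlc
        rw [Nat.choose_eq_zero_of_lt (by omega)]
        simp
      rw [hz, zero_smul, add_zero]
    · rw [show (2*m+1+1)/2 = m+1 from by omega, show (2*m+1)/2+1 = m+1 from by omega]
  have htrim : (∑ k ∈ Finset.range ((n+1)/2+1),
        (mlc (n+1) k * (((n+1-2*k : ℕ):ℝ)*(((n+1-2*k:ℕ):ℝ)+1)/4)) • f (n-2*k))
      = ∑ k ∈ Finset.range (n/2+1),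
        (mlc (n+1) k * (((n+1-2*k : ℕ):ℝ)*(((n+1-2*k:ℕ):ℝ)+1)/4)) • f (n-2*k) := by
    obtain ⟨m, rfl | rfl⟩ := Nat.even_or_odd' n
    · rw [show (2*m+1)/2+1 = m+1 from by omega, show (2*m)/2+1 = m+1 from by omega]
    · rw [show (2*m+1+1)/2+1 = m+2 from by omega, show (2*m+1)/2+1 = m+1 from by omega,
        Finset.sum_range_succ, show 2*m+1+1-2*(m+1) = 0 from by omega]
      norm_num
  have hcomb : (∑ k ∈ Finset.range (n/2+1), mlc (n+2) (k+1) • f (n-2*k))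
      = (∑ k ∈ Finset.range (n/2+1), mlc (n+1) (k+1) • f (n-2*k))
        + (∑ k ∈ Finset.range (n/2+1),
            (mlc (n+1) k * (((n+1-2*k : ℕ):ℝ)*(((n+1-2*k:ℕ):ℝ)+1)/4)) • f (n-2*k))
        - ∑ k ∈ Finset.range (n/2+1), ((((n:ℝ)+2)*((n:ℝ)+3)/4) * mlc n k) • f (n-2*k) := by
    rw [← Finset.sum_add_distrib, ← Finset.sum_sub_distrib]
    refine Finset.sum_congr rfl fun k hk => ?_
    rw [Finset.mem_range] at hk
    rw [← add_smul, ← sub_smul]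
    congr 1
    have hco := coeff_id (n+1) k (by omega)
    simp only [Nat.add_sub_cancel] at hco
    push_cast at hco
    linear_combination hco
  rw [hXS, hCS, hT, hS1, hext, htrim, hcomb, mlc_zero, mlc_zero]
  have hfin : (((n+2:ℕ):ℝ)+1) • f (n+2) = f (n+2) + (((n+1:ℕ):ℝ)+1) • f (n+2) := by
    have hr : ((n+2:ℕ):ℝ)+1 = 1 + (((n+1:ℕ):ℝ)+1) := by push_cast; ring
    rw [hr, add_smul, one_smul]
  rw [hfin]
  abel

/-- `φ̂'_{n+1}(x) = Σ_{k=0}^{⌊n/2⌋} (-1)^k C(n+1,2k+1) (2k)!/2^{2k} φ̂_{n-2k}(x)`. -/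
theorem monicReducedMittagLeffler_deriv (f : ℕ → Polynomial ℝ)
    (h0 : f 0 = 1) (h1 : f 1 = X)
    (hrec : ∀ n : ℕ, 1 ≤ n →
      f (n + 1) = X * f n - C ((n : ℝ) * ((n : ℝ) + 1) / 4) * f (n - 1)) :
    ∀ n : ℕ,
      derivative (f (n + 1)) =
        ∑ k ∈ Finset.range (n / 2 + 1),
          (((-1 : ℝ) ^ k * (Nat.choose (n + 1) (2 * k + 1)) * (Nat.factorial (2 * k)) / 2 ^ (2 * k))) •
            f (n - 2 * k) := by
  intro n
  induction n using Nat.twoStepInduction with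
  | zero =>
    rw [h1]
    norm_num [h0]
  | one =>
    rw [hrec 1 le_rfl, h0, h1]
    norm_num [smul_eq_C_mul, h1]
    rw [map_ofNat]; ring
  | more n ih1 ih2 =>
    simp only [mlc_def] at ih1 ih2 ⊢
    have hd : f (n+2+1) = X * f (n+2) - C (((n+2:ℕ):ℝ) * (((n+2:ℕ):ℝ) + 1) / 4) * f (n+1) :=
      hrec (n+2) (by omega)
    have ih2' : derivative (f (n+2)) = ∑ k ∈ Finset.range ((n+1)/2+1), mlc (n+1) k • f (n+1-2*k) := ih2
    have ih1' : derivative (f (n+1)) = ∑ k ∈ Finset.range (n/2+1), mlc n k • f (n-2*k) := ih1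
    rw [hd, derivative_sub, derivative_mul, derivative_mul, derivative_X, one_mul,
      derivative_C, zero_mul, zero_add, ih2', ih1']
    have hc : (((n+2:ℕ):ℝ) * (((n+2:ℕ):ℝ) + 1) / 4) = ((n:ℝ)+2)*((n:ℝ)+3)/4 := by
      push_cast; ring
    rw [hc, show (n+2)/2+1 = n/2+1+1 from by omega]
    exact key f h0 h1 hrec n
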